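/- Let M be a right R-module. (1) If M ⊕ M is a SIP-CS module satisfying the C2 condition, then M is a CS-Rickart module. (2) If M ⊕ M is a SSP-lifting module satisfying the D2 condition, then M is a d-CS-Rickart module. -/

import Mathlib

universe u v w

section Defs

variable {S : Type u} [Ring S]

/-- A submodule `A` is a direct summand of `M`. -/
def IsDirectSummand {M : Type v} [AddCommGroup M] [Module S M] (A : Submodule S M) : Prop :=
  ∃ B : Submodule S M, A ⊓ B = ⊥ ∧ A ⊔ B = ⊤

/-- `A` is an essential submodule of `B`. -/
def IsEssentialIn {M : Type v} [AddCommGroup M] [Module S M] (A B : Submodule S M) : Prop :=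
  A ≤ B ∧ ∀ K : Submodule S M, K ≤ B → K ≠ ⊥ → A ⊓ K ≠ ⊥

/-- `A` is essential in some direct summand of `M`. -/
def EssentialInSummand {M : Type v} [AddCommGroup M] [Module S M] (A : Submodule S M) : Prop :=
  ∃ D : Submodule S M, IsDirectSummand D ∧ IsEssentialIn A D

/-- `A` is a small (superfluous) submodule of `M`. -/
def IsSmallSubmodule {M : Type v} [AddCommGroup M] [Module S M] (A : Submodule S M) : Prop :=
  ∀ K : Submodule S M, A ⊔ K = ⊤ → K = ⊤

/-- `A` lies above the direct summand `D` of `M`, i.e. `D ≤ A` and `A/D` is small in `M/D`. -/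
def LiesAbove {M : Type v} [AddCommGroup M] [Module S M] (A D : Submodule S M) : Prop :=
  IsDirectSummand D ∧ D ≤ A ∧ IsSmallSubmodule (Submodule.map D.mkQ A)

/-- `A` lies above some direct summand of `M`. -/
def LiesAboveSummand {M : Type v} [AddCommGroup M] [Module S M] (A : Submodule S M) : Prop :=
  ∃ D : Submodule S M, LiesAbove A D

end Defs

section ModDefs

variable (S : Type u) [Ring S]

/-- SSP: the sum of any two direct summands is a direct summand. -/
def HasSSP (M : Type v) [AddCommGroup M] [Module S M] : Prop :=
  ∀ A B : Submodule S M, IsDirectSummand A → IsDirectSummand B → IsDirectSummand (A ⊔ B)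

/-- SIP: the intersection of any two direct summands is a direct summand. -/
def HasSIP (M : Type v) [AddCommGroup M] [Module S M] : Prop :=
  ∀ A B : Submodule S M, IsDirectSummand A → IsDirectSummand B → IsDirectSummand (A ⊓ B)

/-- SIP-CS: the intersection of any finite family of direct summands is essential in a
direct summand. -/
def IsSIPCS (M : Type v) [AddCommGroup M] [Module S M] : Prop :=
  ∀ (ι : Type) [Fintype ι] (A : ι → Submodule S M),
    (∀ i, IsDirectSummand (A i)) → EssentialInSummand (⨅ i, A i)

/-- SSP-lifting: if each member of a finite family of submodules lies above a direct summand,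
then their sum lies above a direct summand. -/
def IsSSPLifting (M : Type v) [AddCommGroup M] [Module S M] : Prop :=
  ∀ (ι : Type) [Fintype ι] (A : ι → Submodule S M),
    (∀ i, LiesAboveSummand (A i)) → LiesAboveSummand (⨆ i, A i)

/-- C2 condition: every submodule isomorphic to a direct summand is a direct summand. -/
def HasC2 (M : Type v) [AddCommGroup M] [Module S M] : Prop :=
  ∀ A B : Submodule S M, IsDirectSummand B → Nonempty (A ≃ₗ[S] B) → IsDirectSummand A

/-- C3 condition: the sum of two direct summands with zero intersection is a direct summand. -/
def HasC3 (M : Type v) [AddCommGroup M] [Module S M] : Prop :=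
  ∀ A B : Submodule S M, IsDirectSummand A → IsDirectSummand B → A ⊓ B = ⊥ →
    IsDirectSummand (A ⊔ B)

/-- D2 condition: if `M/A` is isomorphic to a direct summand of `M` then `A` is a direct
summand. -/
def HasD2 (M : Type v) [AddCommGroup M] [Module S M] : Prop :=
  ∀ A : Submodule S M, (∃ B : Submodule S M, IsDirectSummand B ∧
    Nonempty ((M ⧸ A) ≃ₗ[S] B)) → IsDirectSummand A

/-- D3 condition: if two direct summands sum to `M`, their intersection is a direct summand. -/
def IsD3Module (M : Type v) [AddCommGroup M] [Module S M] : Prop :=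
  ∀ A B : Submodule S M, IsDirectSummand A → IsDirectSummand B → A ⊔ B = ⊤ →
    IsDirectSummand (A ⊓ B)

/-- `M` is relatively CS-Rickart to `N`. -/
def RelCSRickart (M : Type v) (N : Type w) [AddCommGroup M] [Module S M]
    [AddCommGroup N] [Module S N] : Prop :=
  ∀ φ : M →ₗ[S] N, EssentialInSummand (LinearMap.ker φ)

/-- `M` is relatively d-CS-Rickart to `N`. -/
def RelDCSRickart (M : Type v) (N : Type w) [AddCommGroup M] [Module S M]
    [AddCommGroup N] [Module S N] : Prop :=
  ∀ φ : N →ₗ[S] M, LiesAboveSummand (LinearMap.range φ)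

/-- CS-Rickart module. -/
def IsCSRickart (M : Type v) [AddCommGroup M] [Module S M] : Prop :=
  RelCSRickart S M M

/-- d-CS-Rickart module. -/
def IsDCSRickart (M : Type v) [AddCommGroup M] [Module S M] : Prop :=
  RelDCSRickart S M M

/-- `M` has an `Ω`-cover, where `Ω` is the class of modules satisfying `P`. -/
def HasCover (P : ModuleCat.{v} S → Prop) (M : Type v) [AddCommGroup M] [Module S M] : Prop :=
  ∃ (E : ModuleCat.{v} S) (g : E →ₗ[S] M), P E ∧
    (∀ (E' : ModuleCat.{v} S), P E' → ∀ g' : E' →ₗ[S] M,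
      ∃ h : E' →ₗ[S] E, g ∘ₗ h = g') ∧
    (∀ h : E →ₗ[S] E, g ∘ₗ h = g → Function.Bijective h)

/-- `M` has an `Ω`-envelope, where `Ω` is the class of modules satisfying `P`. -/
def HasEnvelope (P : ModuleCat.{v} S → Prop) (M : Type v) [AddCommGroup M] [Module S M] : Prop :=
  ∃ (E : ModuleCat.{v} S) (g : M →ₗ[S] E), P E ∧
    (∀ (E' : ModuleCat.{v} S), P E' → ∀ g' : M →ₗ[S] E',
      ∃ h : E →ₗ[S] E', h ∘ₗ g = g') ∧
    (∀ h : E →ₗ[S] E, h ∘ₗ g = g → Function.Bijective h)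

/-- `M` is 2-generated. -/
def TwoGenerated (M : Type v) [AddCommGroup M] [Module S M] : Prop :=
  ∃ a b : M, Submodule.span S ({a, b} : Set M) = ⊤

/-- `M` is finitely cogenerated. -/
def FinitelyCogenerated (M : Type v) [AddCommGroup M] [Module S M] : Prop :=
  ∀ 𝒜 : Set (Submodule S M), sInf 𝒜 = ⊥ →
    ∃ ℬ ⊆ 𝒜, ℬ.Finite ∧ sInf ℬ = ⊥

/-- The socle of `M`: the sum of all simple submodules. -/
def SocleOf (M : Type v) [AddCommGroup M] [Module S M] : Submodule S M :=
  sSup {A : Submodule S M | IsSimpleModule S ↥A}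

/-- An indecomposable module: nonzero, and its only direct summands are `0` and itself. -/
def IsIndecomposable (M : Type v) [AddCommGroup M] [Module S M] : Prop :=
  (⊤ : Submodule S M) ≠ ⊥ ∧
    ∀ A : Submodule S M, IsDirectSummand A → A = ⊥ ∨ A = ⊤

end ModDefs

section RingDefs

variable (R : Type u) [Ring R]

/-- The right annihilator of an element of a right `R`-module, as a right ideal of `R`. -/
def rightAnnihilator {M : Type v} [AddCommGroup M] [Module Rᵐᵒᵖ M] (m : M) :
    Submodule Rᵐᵒᵖ R where
  carrier := {r : R | MulOpposite.op r • m = 0}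
  add_mem' := by
    intro a b ha hb
    simp only [Set.mem_setOf_eq] at *
    rw [MulOpposite.op_add, add_smul, ha, hb, add_zero]
  zero_mem' := by simp
  smul_mem' := by
    intro c x hx
    simp only [Set.mem_setOf_eq] at *
    have : MulOpposite.op (c • x) = c * MulOpposite.op x := by
      rw [MulOpposite.smul_eq_mul_unop]
      simp [MulOpposite.op_mul]
    rw [this, mul_smul, hx, smul_zero]

/-- `M` is a nonsingular right `R`-module. -/
def IsNonsingular (M : Type v) [AddCommGroup M] [Module Rᵐᵒᵖ M] : Prop :=
  ∀ m : M, IsEssentialIn (rightAnnihilator R m) (⊤ : Submodule Rᵐᵒᵖ R) → m = 0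

/-- `R` is a right V-ring: every simple right `R`-module is injective. -/
def IsRightVRing : Prop :=
  ∀ (N : Type u) [AddCommGroup N] [Module Rᵐᵒᵖ N],
    IsSimpleModule Rᵐᵒᵖ N → Module.Injective Rᵐᵒᵖ N

/-- `R` is semiregular: `R/J(R)` is von Neumann regular and idempotents lift modulo `J(R)`. -/
def IsSemiregularRing : Prop :=
  (∀ a : R, ∃ b : R, a - a * b * a ∈ Ideal.jacobson (⊥ : Ideal R) ∧ b = b * a * b) ∧
  (∀ a : R, a * a - a ∈ Ideal.jacobson (⊥ : Ideal R) →
    ∃ e : R, e * e = e ∧ e - a ∈ Ideal.jacobson (⊥ : Ideal R))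

end RingDefs

section AuxHelpers

open Submodule LinearMap

variable {S' : Type u} [Ring S'] {M' : Type v} [AddCommGroup M'] [Module S' M']

lemma aux_summand_of_prod_bot {p : Submodule S' M'}
    (h : IsDirectSummand (p.prod (⊥ : Submodule S' M'))) : IsDirectSummand p := by
  obtain ⟨C, hinf, hsup⟩ := h
  refine ⟨C.comap (LinearMap.inl S' M' M'), ?_, ?_⟩
  · rw [eq_bot_iff]
    rintro x ⟨hxp, hxC⟩
    have hx : ((x, 0) : M' × M') ∈ p.prod (⊥ : Submodule S' M') ⊓ C :=
      ⟨⟨hxp, rfl⟩, hxC⟩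
    rw [hinf] at hx
    simpa using congrArg Prod.fst ((Submodule.mem_bot S').mp hx)
  · rw [eq_top_iff]
    rintro m -
    have hx : ((m, 0) : M' × M') ∈ p.prod (⊥ : Submodule S' M') ⊔ C := by
      rw [hsup]; trivial
    obtain ⟨y, hy, z, hz, hyz⟩ := Submodule.mem_sup.mp hx
    have hz2 : z.2 = 0 := by
      have := congrArg Prod.snd hyz
      simp only [Prod.snd_add] at this
      have hy2 : y.2 = 0 := hy.2
      simpa [hy2] using this
    have hzC : z.1 ∈ C.comap (LinearMap.inl S' M' M') := by
      have : (LinearMap.inl S' M' M') z.1 = z := by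
        ext <;> simp [hz2]
      simpa [Submodule.mem_comap, this] using hz
    refine Submodule.mem_sup.mpr ⟨y.1, hy.1, z.1, hzC, ?_⟩
    have := congrArg Prod.fst hyz
    simpa using this

lemma aux_summand_of_bot_prod {p : Submodule S' M'}
    (h : IsDirectSummand ((⊥ : Submodule S' M').prod p)) : IsDirectSummand p := by
  obtain ⟨C, hinf, hsup⟩ := h
  refine ⟨C.comap (LinearMap.inr S' M' M'), ?_, ?_⟩
  · rw [eq_bot_iff]
    rintro x ⟨hxp, hxC⟩
    have hx : ((0, x) : M' × M') ∈ (⊥ : Submodule S' M').prod p ⊓ C :=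
      ⟨⟨rfl, hxp⟩, hxC⟩
    rw [hinf] at hx
    simpa using congrArg Prod.snd ((Submodule.mem_bot S').mp hx)
  · rw [eq_top_iff]
    rintro m -
    have hx : ((0, m) : M' × M') ∈ (⊥ : Submodule S' M').prod p ⊔ C := by
      rw [hsup]; trivial
    obtain ⟨y, hy, z, hz, hyz⟩ := Submodule.mem_sup.mp hx
    have hz1 : z.1 = 0 := by
      have := congrArg Prod.fst hyz
      simp only [Prod.fst_add] at this
      have hy1 : y.1 = 0 := hy.1
      simpa [hy1] using this
    have hzC : z.2 ∈ C.comap (LinearMap.inr S' M' M') := by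
      have : (LinearMap.inr S' M' M') z.2 = z := by
        ext <;> simp [hz1]
      simpa [Submodule.mem_comap, this] using hz
    refine Submodule.mem_sup.mpr ⟨y.2, hy.2, z.2, hzC, ?_⟩
    have := congrArg Prod.snd hyz
    simpa using this

lemma aux_essential_map {N : Type w} [AddCommGroup N] [Module S' N] (f : M' →ₗ[S'] N)
    {A D : Submodule S' M'} (h : IsEssentialIn A D) (hinj : ∀ x ∈ D, f x = 0 → x = 0) :
    IsEssentialIn (A.map f) (D.map f) := by
  refine ⟨Submodule.map_mono h.1, ?_⟩
  intro K hK hKne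
  obtain ⟨k, hkK, hk0⟩ := (Submodule.ne_bot_iff K).mp hKne
  obtain ⟨d, hdD, hdk⟩ := hK hkK
  have hK'ne : (K.comap f ⊓ D) ≠ ⊥ := by
    rw [Submodule.ne_bot_iff]
    refine ⟨d, ⟨by simp [Submodule.mem_comap, hdk, hkK], hdD⟩, ?_⟩
    rintro rfl
    exact hk0 (by simpa using hdk.symm)
  have := h.2 (K.comap f ⊓ D) inf_le_right hK'ne
  rw [Submodule.ne_bot_iff] at this ⊢
  obtain ⟨x, ⟨hxA, hxK, hxD⟩, hx0⟩ := this
  exact ⟨f x, ⟨Submodule.mem_map_of_mem hxA, hxK⟩, fun h0 => hx0 (hinj x hxD h0)⟩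

lemma aux_small_bot : IsSmallSubmodule (⊥ : Submodule S' M') := fun K hK => by
  rwa [bot_sup_eq] at hK

lemma aux_map_mkQ_self (A : Submodule S' M') : A.map A.mkQ = ⊥ := by
  rw [eq_bot_iff]
  rintro x ⟨a, ha, rfl⟩
  simpa [Submodule.mem_bot, Submodule.Quotient.mk_eq_zero] using ha

lemma aux_small_map_mkQ_iff {E A : Submodule S' M'} (hEA : E ≤ A) :
    IsSmallSubmodule (A.map E.mkQ) ↔ ∀ K : Submodule S' M', A ⊔ K = ⊤ → E ⊔ K = ⊤ := by
  constructor
  · intro hs K hK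
    have h1 : A.map E.mkQ ⊔ K.map E.mkQ = ⊤ := by
      rw [← Submodule.map_sup, hK, Submodule.map_top, Submodule.range_mkQ]
    have h2 := hs _ h1
    have h3 : (K.map E.mkQ).comap E.mkQ = ⊤ := by rw [h2, Submodule.comap_top]
    rw [Submodule.comap_map_eq, Submodule.ker_mkQ] at h3
    rwa [sup_comm] at h3
  · intro h K' hK'
    have hmapK : (K'.comap E.mkQ).map E.mkQ = K' := by
      rw [Submodule.map_comap_eq, Submodule.range_mkQ, top_inf_eq]
    have hAK : A ⊔ K'.comap E.mkQ = ⊤ := by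
      have h1 : (A ⊔ K'.comap E.mkQ).map E.mkQ = ⊤ := by
        rw [Submodule.map_sup, hmapK, hK']
      have h2 := congrArg (Submodule.comap E.mkQ) h1
      rw [Submodule.comap_map_eq, Submodule.ker_mkQ, Submodule.comap_top] at h2
      have hE : E ≤ A ⊔ K'.comap E.mkQ := le_trans hEA le_sup_left
      rwa [sup_eq_left.mpr hE] at h2
    have h4 := h _ hAK
    have h5 := congrArg (Submodule.map E.mkQ) h4
    rw [Submodule.map_sup, hmapK, Submodule.map_top, Submodule.range_mkQ,
      aux_map_mkQ_self, bot_sup_eq] at h5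
    exact h5

lemma aux_d2_d3 (h2 : HasD2 S' M') {A B : Submodule S' M'} (hA : IsDirectSummand A)
    (hB : IsDirectSummand B) (hsup : A ⊔ B = ⊤) : IsDirectSummand (A ⊓ B) := by
  classical
  obtain ⟨A', hA1, hA2⟩ := hA
  obtain ⟨B', hB1, hB2⟩ := hB
  have hcA : IsCompl A A' := ⟨disjoint_iff.mpr hA1, codisjoint_iff.mpr hA2⟩
  have hcB : IsCompl B B' := ⟨disjoint_iff.mpr hB1, codisjoint_iff.mpr hB2⟩
  set pB : M' →ₗ[S'] B := Submodule.projectionOnto B B' hcB with hpB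
  set pA' : M' →ₗ[S'] A' := Submodule.projectionOnto A' A hcA.symm with hpA'
  set f : M' →ₗ[S'] A' := pA' ∘ₗ (B.subtype ∘ₗ pB) with hf
  have hfsurj : Function.Surjective f := by
    intro a'
    have : (a' : M') ∈ A ⊔ B := by rw [hsup]; trivial
    obtain ⟨a, ha, b, hb, hab⟩ := Submodule.mem_sup.mp this
    refine ⟨b, ?_⟩
    have h1 : pB b = ⟨b, hb⟩ := Submodule.projectionOnto_apply_left hcB ⟨b, hb⟩
    have hba : b = (a' : M') - a := by rw [← hab]; abel
    have h2 : pA' b = a' := by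
      rw [hba, map_sub]
      have h3 : pA' (a' : M') = a' := Submodule.projectionOnto_apply_left hcA.symm a'
      have h4 : pA' a = 0 := Submodule.projectionOnto_apply_of_mem_right hcA.symm ha
      rw [h3, h4, sub_zero]
    simp only [hf, LinearMap.comp_apply, Submodule.subtype_apply, h1]
    exact h2
  have hker : LinearMap.ker f = (A ⊓ B) ⊔ B' := by
    ext m
    simp only [LinearMap.mem_ker, hf, LinearMap.comp_apply, Submodule.subtype_apply]
    constructor
    · intro hm
      have hmB : ((pB m : M')) ∈ A :=
        (Submodule.projectionOnto_apply_eq_zero_iff hcA.symm).mp hm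
      have hsplit : m - (pB m : M') ∈ B' := by
        rw [← Submodule.projectionOnto_apply_eq_zero_iff hcB]
        rw [map_sub]
        have : pB ((pB m : M')) = pB m := Submodule.projectionOnto_apply_left hcB (pB m)
        rw [this, sub_self]
      have hmem : (pB m : M') ∈ A ⊓ B := ⟨hmB, (pB m).2⟩
      have : m = (pB m : M') + (m - (pB m : M')) := by abel
      rw [this]
      exact Submodule.add_mem_sup hmem hsplit
    · intro hm
      obtain ⟨x, hx, y, hy, hxy⟩ := Submodule.mem_sup.mp hm
      have h1 : pB m = ⟨x, hx.2⟩ := by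
        rw [← hxy, map_add]
        have h2 : pB x = ⟨x, hx.2⟩ := Submodule.projectionOnto_apply_left hcB ⟨x, hx.2⟩
        have h3 : pB y = 0 := Submodule.projectionOnto_apply_of_mem_right hcB hy
        rw [h2, h3, add_zero]
      rw [h1]
      exact Submodule.projectionOnto_apply_of_mem_right hcA.symm hx.1
  have hX : IsDirectSummand ((A ⊓ B) ⊔ B') := by
    refine h2 _ ⟨A', ⟨A, by rwa [inf_comm], by rwa [sup_comm]⟩, ⟨?_⟩⟩
    exact (Submodule.quotEquivOfEq _ _ hker.symm).trans (f.quotKerEquivOfSurjective hfsurj)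
  obtain ⟨Y, hY1, hY2⟩ := hX
  refine ⟨B' ⊔ Y, ?_, ?_⟩
  · rw [eq_bot_iff]
    rintro x ⟨hxAB, hxBY⟩
    obtain ⟨b', hb', y, hy, hxy⟩ := Submodule.mem_sup.mp hxBY
    have hyX : y ∈ (A ⊓ B) ⊔ B' := by
      have : y = x - b' := by rw [← hxy]; abel
      rw [this]
      exact Submodule.sub_mem _ (Submodule.mem_sup_left hxAB) (Submodule.mem_sup_right hb')
    have hy0 : y = 0 := by
      have : y ∈ ((A ⊓ B) ⊔ B') ⊓ Y := ⟨hyX, hy⟩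
      rwa [hY1, Submodule.mem_bot] at this
    have hxb' : x = b' := by rw [← hxy, hy0, add_zero]
    have : x ∈ B ⊓ B' := ⟨hxAB.2, hxb' ▸ hb'⟩
    rwa [hB1, Submodule.mem_bot] at this
  · rw [← sup_assoc, hY2]

end AuxHelpers


/-- (1) if `M ⊕ M` is SIP-CS with C2, then `M` is CS-Rickart; (2) if `M ⊕ M` is
SSP-lifting with D2, then `M` is d-CS-Rickart. -/
theorem statement_13 (R : Type u) [Ring R] (M : Type v) [AddCommGroup M] [Module Rᵐᵒᵖ M] :
    (IsSIPCS Rᵐᵒᵖ (M × M) → HasC2 Rᵐᵒᵖ (M × M) → IsCSRickart Rᵐᵒᵖ M) ∧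
    (IsSSPLifting Rᵐᵒᵖ (M × M) → HasD2 Rᵐᵒᵖ (M × M) → IsDCSRickart Rᵐᵒᵖ M) := by
  have hM1 : IsDirectSummand ((⊤ : Submodule Rᵐᵒᵖ M).prod (⊥ : Submodule Rᵐᵒᵖ M)) := by
    refine ⟨(⊥ : Submodule Rᵐᵒᵖ M).prod ⊤, ?_, ?_⟩
    · rw [eq_bot_iff]
      rintro ⟨x, y⟩ ⟨h1, h2⟩
      have hy : y = 0 := h1.2
      have hx : x = 0 := h2.1
      simp [hx, hy, Prod.ext_iff]
    · rw [eq_top_iff]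
      rintro ⟨x, y⟩ -
      refine Submodule.mem_sup.mpr ⟨(x, 0), ⟨trivial, rfl⟩, (0, y), ⟨rfl, trivial⟩, by simp⟩
  have hM2 : IsDirectSummand ((⊥ : Submodule Rᵐᵒᵖ M).prod (⊤ : Submodule Rᵐᵒᵖ M)) := by
    refine ⟨(⊤ : Submodule Rᵐᵒᵖ M).prod ⊥, ?_, ?_⟩
    · rw [eq_bot_iff]
      rintro ⟨x, y⟩ ⟨h1, h2⟩
      have hx : x = 0 := h1.1
      have hy : y = 0 := h2.2
      simp [hx, hy, Prod.ext_iff]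
    · rw [eq_top_iff]
      rintro ⟨x, y⟩ -
      refine Submodule.mem_sup.mpr ⟨(0, y), ⟨rfl, trivial⟩, (x, 0), ⟨trivial, rfl⟩, by simp⟩
  constructor
  · -- Part 1
    intro hsip hc2 φ
    have hginj : Function.Injective (LinearMap.prod (LinearMap.id) φ : M →ₗ[Rᵐᵒᵖ] M × M) := by
      intro x y h
      simpa using congrArg Prod.fst h
    -- the graph of φ
    have hΓ : IsDirectSummand (LinearMap.range (LinearMap.prod (LinearMap.id) φ)) := by
      refine hc2 _ _ hM1 ⟨?_⟩
      have hinlinj : Function.Injective (LinearMap.inl Rᵐᵒᵖ M M) := fun a b h => by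
        simpa using congrArg Prod.fst h
      have heq : LinearMap.range (LinearMap.inl Rᵐᵒᵖ M M)
          = (⊤ : Submodule Rᵐᵒᵖ M).prod ⊥ := by
        rw [LinearMap.range_eq_map, Submodule.map_inl]
      exact ((LinearEquiv.ofInjective _ hginj).symm.trans
        (LinearEquiv.ofInjective _ hinlinj)).trans (LinearEquiv.ofEq _ _ heq)
    have hfam : ∀ b : Bool, IsDirectSummand
        ((fun b => if b then LinearMap.range (LinearMap.prod (LinearMap.id) φ)
          else (⊤ : Submodule Rᵐᵒᵖ M).prod ⊥) b) := by
      rintro (_ | _)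
      · simpa using hM1
      · simpa using hΓ
    obtain ⟨D, hD, hess0⟩ := hsip Bool _ hfam
    rw [iInf_bool_eq] at hess0
    have hess : IsEssentialIn (LinearMap.range (LinearMap.prod (LinearMap.id) φ)
        ⊓ (⊤ : Submodule Rᵐᵒᵖ M).prod ⊥) D := hess0
    have hinter : LinearMap.range (LinearMap.prod (LinearMap.id) φ)
        ⊓ (⊤ : Submodule Rᵐᵒᵖ M).prod ⊥ = (LinearMap.ker φ).prod ⊥ := by
      ext ⟨x, y⟩
      constructor
      · rintro ⟨⟨m, hm⟩, -, hy⟩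
        have hm1 : m = x := congrArg Prod.fst hm
        have hm2 : φ m = y := congrArg Prod.snd hm
        have hy0 : y = 0 := hy
        refine ⟨?_, hy⟩
        show φ x = 0
        rw [← hm1, hm2, hy0]
      · rintro ⟨hx, hy⟩
        have hy0 : y = 0 := hy
        have hφx : φ x = 0 := hx
        refine ⟨⟨x, ?_⟩, trivial, hy⟩
        have : (LinearMap.prod (LinearMap.id) φ) x = (x, φ x) := rfl
        rw [this, hφx, hy0]
    rw [hinter] at hess
    -- D meets 0 × M trivially
    have hDM2 : ∀ x ∈ D, x.1 = 0 → x = 0 := by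
      intro x hxD hx1
      by_contra hx0
      have hne : D ⊓ (⊥ : Submodule Rᵐᵒᵖ M).prod ⊤ ≠ ⊥ := by
        rw [Submodule.ne_bot_iff]
        exact ⟨x, ⟨hxD, hx1, trivial⟩, hx0⟩
      have := hess.2 _ inf_le_left hne
      apply this
      rw [eq_bot_iff]
      rintro z ⟨⟨-, hz2⟩, -, hz1, -⟩
      have h1 : z.1 = 0 := hz1
      have h2 : z.2 = 0 := hz2
      simp [Submodule.mem_bot, Prod.ext_iff, h1, h2]
    -- inject D into M via fst
    have hinjD : ∀ x ∈ D, (LinearMap.fst Rᵐᵒᵖ M M) x = 0 → x = 0 := fun x hx h =>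
      hDM2 x hx h
    have hessE : IsEssentialIn (LinearMap.ker φ) (D.map (LinearMap.fst Rᵐᵒᵖ M M)) := by
      have := aux_essential_map (LinearMap.fst Rᵐᵒᵖ M M) hess hinjD
      rwa [Submodule.prod_map_fst] at this
    refine ⟨D.map (LinearMap.fst Rᵐᵒᵖ M M), ?_, hessE⟩
    -- E is a direct summand, via C2
    have hf'inj : Function.Injective ((LinearMap.fst Rᵐᵒᵖ M M) ∘ₗ D.subtype) := by
      rw [← LinearMap.ker_eq_bot, eq_bot_iff]
      rintro ⟨x, hx⟩ h
      have hx0 : x = 0 := hDM2 x hx (by simpa using h)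
      have h0 : (⟨x, hx⟩ : D) = 0 := Subtype.ext (by simpa using hx0)
      simpa [Submodule.mem_bot] using h0
    have hr1 : LinearMap.range ((LinearMap.fst Rᵐᵒᵖ M M) ∘ₗ D.subtype)
        = D.map (LinearMap.fst Rᵐᵒᵖ M M) := by
      rw [LinearMap.range_comp, Submodule.range_subtype]
    have hf''inj : Function.Injective
        ((LinearMap.inl Rᵐᵒᵖ M M) ∘ₗ (D.map (LinearMap.fst Rᵐᵒᵖ M M)).subtype) := by
      intro a b h
      apply Subtype.ext
      simpa using congrArg Prod.fst h
    have hr2 : LinearMap.range ((LinearMap.inl Rᵐᵒᵖ M M)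
          ∘ₗ (D.map (LinearMap.fst Rᵐᵒᵖ M M)).subtype)
        = (D.map (LinearMap.fst Rᵐᵒᵖ M M)).prod ⊥ := by
      rw [LinearMap.range_comp, Submodule.range_subtype, Submodule.map_inl]
    have hEprod : IsDirectSummand ((D.map (LinearMap.fst Rᵐᵒᵖ M M)).prod
        (⊥ : Submodule Rᵐᵒᵖ M)) := by
      refine hc2 _ D hD ⟨?_⟩
      exact ((LinearEquiv.ofEq _ _ hr2).symm.trans
        (LinearEquiv.ofInjective _ hf''inj).symm).trans
        ((LinearEquiv.ofInjective _ hf'inj).trans (LinearEquiv.ofEq _ _ hr1)).symm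
    exact aux_summand_of_prod_bot hEprod
  · -- Part 2
    intro hssp hd2 φ
    -- the graph of φ is a direct summand, via D2
    have hΓ : IsDirectSummand (LinearMap.range (LinearMap.prod (LinearMap.id) φ)) := by
      refine hd2 _ ⟨(⊥ : Submodule Rᵐᵒᵖ M).prod ⊤, hM2, ⟨?_⟩⟩
      have hkerψ : LinearMap.ker ((LinearMap.inr Rᵐᵒᵖ M M)
            ∘ₗ ((LinearMap.snd Rᵐᵒᵖ M M) - φ ∘ₗ (LinearMap.fst Rᵐᵒᵖ M M)))
          = LinearMap.range (LinearMap.prod (LinearMap.id) φ) := by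
        ext ⟨x, y⟩
        simp only [LinearMap.mem_ker, LinearMap.comp_apply, LinearMap.sub_apply,
          LinearMap.snd_apply, LinearMap.fst_apply, LinearMap.mem_range,
          LinearMap.prod_apply]
        constructor
        · intro h
          have h0 : y - φ x = 0 := by
            have := congrArg Prod.snd h
            simpa using this
          exact ⟨x, by ext <;> simp [sub_eq_zero.mp h0]⟩
        · rintro ⟨m, hm⟩
          have hm1 : m = x := congrArg Prod.fst hm
          have hm2 : φ m = y := congrArg Prod.snd hm
          have : y - φ x = 0 := by rw [← hm1, hm2, sub_self]
          simp [this]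
      have hrψ : LinearMap.range ((LinearMap.inr Rᵐᵒᵖ M M)
            ∘ₗ ((LinearMap.snd Rᵐᵒᵖ M M) - φ ∘ₗ (LinearMap.fst Rᵐᵒᵖ M M)))
          = (⊥ : Submodule Rᵐᵒᵖ M).prod ⊤ := by
        ext ⟨x, y⟩
        constructor
        · rintro ⟨⟨m, n⟩, hmn⟩
          have h1 : x = 0 := by
            have := congrArg Prod.fst hmn
            simpa using this.symm
          exact ⟨h1 ▸ rfl, trivial⟩
        · rintro ⟨hx, -⟩
          have hx0 : x = 0 := hx
          refine ⟨(0, y), ?_⟩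
          simp [hx0, Prod.ext_iff]
      exact (Submodule.quotEquivOfEq _ _ hkerψ.symm).trans
        ((LinearMap.quotKerEquivRange _).trans (LinearEquiv.ofEq _ _ hrψ))
    have hself : ∀ A : Submodule Rᵐᵒᵖ (M × M), IsDirectSummand A → LiesAboveSummand A :=
      fun A hA => ⟨A, hA, le_rfl, by rw [aux_map_mkQ_self]; exact aux_small_bot⟩
    have hfam : ∀ b : Bool, LiesAboveSummand
        ((fun b => if b then LinearMap.range (LinearMap.prod (LinearMap.id) φ)
          else (⊤ : Submodule Rᵐᵒᵖ M).prod ⊥) b) := by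
      rintro (_ | _)
      · simpa using hself _ hM1
      · simpa using hself _ hΓ
    obtain ⟨D, hD, hDle0, hDsmall0⟩ := hssp Bool _ hfam
    rw [iSup_bool_eq] at hDle0 hDsmall0
    have hDle : D ≤ LinearMap.range (LinearMap.prod (LinearMap.id) φ)
        ⊔ (⊤ : Submodule Rᵐᵒᵖ M).prod ⊥ := hDle0
    have hDsmall : IsSmallSubmodule (Submodule.map D.mkQ
        (LinearMap.range (LinearMap.prod (LinearMap.id) φ)
          ⊔ (⊤ : Submodule Rᵐᵒᵖ M).prod ⊥)) := hDsmall0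
    have hsupΓ : LinearMap.range (LinearMap.prod (LinearMap.id) φ)
        ⊔ (⊤ : Submodule Rᵐᵒᵖ M).prod ⊥
        = (⊤ : Submodule Rᵐᵒᵖ M).prod (LinearMap.range φ) := by
      apply le_antisymm
      · refine sup_le ?_ ?_
        · rintro z ⟨m, hm⟩
          exact ⟨trivial, ⟨m, congrArg Prod.snd hm⟩⟩
        · rintro ⟨x, y⟩ ⟨-, hy⟩
          have hy0 : y = 0 := hy
          exact ⟨trivial, by rw [hy0]; exact Submodule.zero_mem _⟩
      · rintro ⟨x, y⟩ ⟨-, m, hm⟩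
        refine Submodule.mem_sup.mpr ⟨(m, φ m), ⟨m, rfl⟩, (x - m, 0), ⟨trivial, rfl⟩, ?_⟩
        rw [Prod.mk_add_mk, hm]
        simp
    rw [hsupΓ] at hDle hDsmall
    have hstar := (aux_small_map_mkQ_iff hDle).mp hDsmall
    have hDM2 : D ⊔ (⊥ : Submodule Rᵐᵒᵖ M).prod ⊤ = ⊤ := by
      refine hstar _ ?_
      rw [eq_top_iff]
      rintro ⟨x, y⟩ -
      exact Submodule.mem_sup.mpr ⟨(x, 0), ⟨trivial, Submodule.zero_mem _⟩,
        (0, y), ⟨rfl, trivial⟩, by simp⟩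
    have hP : IsDirectSummand (D ⊓ (⊥ : Submodule Rᵐᵒᵖ M).prod ⊤) :=
      aux_d2_d3 hd2 hD hM2 hDM2
    have hPE : D ⊓ (⊥ : Submodule Rᵐᵒᵖ M).prod ⊤
        = (⊥ : Submodule Rᵐᵒᵖ M).prod (D.comap (LinearMap.inr Rᵐᵒᵖ M M)) := by
      ext ⟨x, y⟩
      constructor
      · rintro ⟨hxyD, hx, -⟩
        have hx0 : x = 0 := hx
        refine ⟨hx, ?_⟩
        show (LinearMap.inr Rᵐᵒᵖ M M) y ∈ D
        have : (LinearMap.inr Rᵐᵒᵖ M M) y = (x, y) := by simp [hx0, Prod.ext_iff]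
        rwa [this]
      · rintro ⟨hx, hy⟩
        have hx0 : x = 0 := hx
        have : ((x, y) : M × M) = (LinearMap.inr Rᵐᵒᵖ M M) y := by
          simp [hx0, Prod.ext_iff]
        exact ⟨this ▸ hy, hx, trivial⟩
    have hE0 : IsDirectSummand (D.comap (LinearMap.inr Rᵐᵒᵖ M M)) :=
      aux_summand_of_bot_prod (hPE ▸ hP)
    have hE0le : D.comap (LinearMap.inr Rᵐᵒᵖ M M) ≤ LinearMap.range φ := by
      intro y hy
      have := hDle hy
      simpa using this.2
    refine ⟨D.comap (LinearMap.inr Rᵐᵒᵖ M M), hE0, hE0le,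
      (aux_small_map_mkQ_iff hE0le).mpr ?_⟩
    intro K hK
    have hAK : (⊤ : Submodule Rᵐᵒᵖ M).prod (LinearMap.range φ)
        ⊔ (⊥ : Submodule Rᵐᵒᵖ M).prod K = ⊤ := by
      rw [eq_top_iff]
      rintro ⟨x, y⟩ -
      have : y ∈ LinearMap.range φ ⊔ K := by rw [hK]; trivial
      obtain ⟨r, hr, k, hk, hrk⟩ := Submodule.mem_sup.mp this
      refine Submodule.mem_sup.mpr ⟨(x, r), ⟨trivial, hr⟩, (0, k), ⟨rfl, hk⟩, ?_⟩
      rw [Prod.mk_add_mk, add_zero, hrk]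
    have hDK : D ⊔ (⊥ : Submodule Rᵐᵒᵖ M).prod K = ⊤ := hstar _ hAK
    have hmod := sup_inf_assoc_of_le (x := (⊥ : Submodule Rᵐᵒᵖ M).prod K) D
      (Submodule.prod_mono le_rfl le_top : (⊥ : Submodule Rᵐᵒᵖ M).prod K
        ≤ (⊥ : Submodule Rᵐᵒᵖ M).prod ⊤)
    rw [sup_comm _ D, hDK, top_inf_eq, hPE] at hmod
    have hsupKE : (⊥ : Submodule Rᵐᵒᵖ M).prod K
        ⊔ (⊥ : Submodule Rᵐᵒᵖ M).prod (D.comap (LinearMap.inr Rᵐᵒᵖ M M))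
        = (⊥ : Submodule Rᵐᵒᵖ M).prod (K ⊔ D.comap (LinearMap.inr Rᵐᵒᵖ M M)) := by
      apply le_antisymm
      · exact sup_le (Submodule.prod_mono le_rfl le_sup_left)
          (Submodule.prod_mono le_rfl le_sup_right)
      · rintro ⟨x, y⟩ ⟨hx, hy⟩
        obtain ⟨k, hk, e, he, hke⟩ := Submodule.mem_sup.mp hy
        have hx0 : x = 0 := hx
        refine Submodule.mem_sup.mpr ⟨(0, k), ⟨rfl, hk⟩, (0, e), ⟨rfl, he⟩, ?_⟩
        rw [Prod.mk_add_mk, add_zero, hke, hx0]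
    rw [hsupKE] at hmod
    rw [eq_top_iff]
    rintro y -
    have : ((0 : M), y) ∈ (⊥ : Submodule Rᵐᵒᵖ M).prod
        (K ⊔ D.comap (LinearMap.inr Rᵐᵒᵖ M M)) := by
      rw [← hmod]
      exact ⟨rfl, trivial⟩
    rw [sup_comm]
    exact this.2
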